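/- For every Dallajascar (φ, H, r) on a finite nonempty type S, the word M(φ,H) is a Simple Jassological word: it is nonempty, it contains equally many occurrences of true and false, and every nonempty proper prefix of it contains strictly more occurrences of true than of false. -/

import Mathlib

/-- A *Dallajascar* on a finite nonempty type `S`: a parent function `phi : S → Option S`,
an ordered-children function `H : S → List S`, and a root `r : S`, such that
(i) `phi r = none`; (ii) `phi x ≠ none` for `x ≠ r`; (iii) the transitive closure of the
parent relation is irreflexive; (iv) `H x` is a duplicate-free list whose members are
exactly the `y` with `phi y = some x`. -/
structure Dallajascar (S : Type*) [Fintype S] [Nonempty S] where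
  phi : S → Option S
  H : S → List S
  r : S
  phi_root : phi r = none
  phi_ne_none : ∀ x : S, x ≠ r → phi x ≠ none
  acyclic : ∀ x : S, ¬ Relation.TransGen (fun y z => phi y = some z) x x
  H_nodup : ∀ x : S, (H x).Nodup
  mem_H : ∀ x y : S, y ∈ H x ↔ phi y = some x

namespace Dallajascar

variable {S : Type*} [Fintype S] [Nonempty S]

/-- The parent relation: `P D y x` iff `x` is the parent of `y`. -/
def P (D : Dallajascar S) (y x : S) : Prop := D.phi y = some x

/-- The parent relation is well-founded. -/
theorem wfP (D : Dallajascar S) : WellFounded D.P := by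
  haveI : IsTrans S (Relation.TransGen D.P) := ⟨fun _ _ _ h₁ h₂ => h₁.trans h₂⟩
  haveI : IsIrrefl S (Relation.TransGen D.P) := ⟨D.acyclic⟩
  exact Subrelation.wf (r := Relation.TransGen D.P)
    (fun {x y} h => Relation.TransGen.single h)
    (Finite.wellFounded_of_trans_of_irrefl _)

/-- `W D x` : the word over `{true (open), false (close)}` associated with the subtree
rooted at `x`, defined by well-founded recursion:
`W x = true :: (((H x).map W).flatten ++ [false])`. -/
noncomputable def W (D : Dallajascar S) : S → List Bool :=
  D.wfP.fix fun x ih =>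
    true :: ((((D.H x).attach.map fun (y : {y : S // y ∈ D.H x}) =>
      ih y.1 ((D.mem_H x y.1).1 y.2)).flatten) ++ [false])

/-- `M(φ,H)` : the Jassological word of the Dallajascar. -/
noncomputable def MJword (D : Dallajascar S) : List Bool := D.W D.r

end Dallajascar

/-- A *Mot Jassologique Simple* : a nonempty word containing equally many opening
(`true`) and closing (`false`) characters, every nonempty proper prefix of which contains
strictly more opening than closing characters. -/
def SimpleJasso (M : List Bool) : Prop :=
  M ≠ [] ∧ M.count true = M.count false ∧
    ∀ t : List Bool, t <+: M → t ≠ [] → t ≠ M → t.count false < t.count true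

section Aux
variable {α : Type*}

lemma prefix_append_cases {s A B : List α} (h : s <+: A ++ B) :
    s <+: A ∨ ∃ s', s = A ++ s' ∧ s' <+: B := by
  rcases le_or_gt s.length A.length with hl | hl
  · exact Or.inl (List.prefix_of_prefix_length_le h (A.prefix_append B) hl)
  · have hA : A <+: s := List.prefix_of_prefix_length_le (A.prefix_append B) h hl.le
    obtain ⟨s', rfl⟩ := hA
    obtain ⟨u, hu⟩ := h
    refine Or.inr ⟨s', rfl, u, ?_⟩
    rwa [List.append_assoc, List.append_cancel_left_eq] at hu

/-- Balanced: equal counts, and every prefix has at least as many `true` as `false`. -/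
def Bal (M : List Bool) : Prop :=
  M.count true = M.count false ∧ ∀ s : List Bool, s <+: M → s.count false ≤ s.count true

lemma bal_nil : Bal [] := ⟨rfl, fun s hs => by simp [List.prefix_nil.mp hs]⟩

lemma bal_append {A B : List Bool} (hA : Bal A) (hB : Bal B) : Bal (A ++ B) := by
  refine ⟨by simp [hA.1, hB.1], fun s hs => ?_⟩
  rcases prefix_append_cases hs with h | ⟨s', rfl, h⟩
  · exact hA.2 s h
  · simp only [List.count_append]
    exact Nat.add_le_add (le_of_eq hA.1.symm) (hB.2 s' h)

lemma bal_of_simpleJasso {M : List Bool} (h : SimpleJasso M) : Bal M := by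
  refine ⟨h.2.1, fun s hs => ?_⟩
  by_cases h0 : s = []
  · simp [h0]
  by_cases h1 : s = M
  · exact h1 ▸ le_of_eq h.2.1.symm
  · exact (h.2.2 s hs h0 h1).le

lemma bal_flatten {L : List (List Bool)} (h : ∀ A ∈ L, Bal A) : Bal L.flatten := by
  induction L with
  | nil => exact bal_nil
  | cons A L ih =>
      exact bal_append (h A (by simp)) (ih fun B hB => h B (by simp [hB]))

lemma simpleJasso_of_bal {body : List Bool} (h : Bal body) :
    SimpleJasso (true :: (body ++ [false])) := by
  refine ⟨by simp, by simp [List.count_append, h.1], fun t ht ht0 htM => ?_⟩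
  obtain ⟨t', rfl⟩ : ∃ t', t = true :: t' := by
    cases t with
    | nil => exact absurd rfl ht0
    | cons a t' =>
        obtain ⟨u, hu⟩ := ht
        simp only [List.cons_append, List.cons.injEq] at hu
        exact ⟨t', by rw [hu.1]⟩
  have ht' : t' <+: body ++ [false] := by
    obtain ⟨u, hu⟩ := ht
    exact ⟨u, by simpa using hu⟩
  have hle : t'.count false ≤ t'.count true := by
    rcases prefix_append_cases ht' with hp | ⟨s', rfl, hs'⟩
    · exact h.2 t' hp
    · rcases s' with _ | ⟨a, s'⟩
      · simp [List.count_append, le_of_eq h.1.symm]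
      · obtain ⟨u, hu⟩ := hs'
        simp only [List.cons_append, List.cons.injEq, List.append_eq_nil_iff] at hu
        obtain ⟨rfl, rfl, rfl⟩ := hu
        exact absurd rfl htM
  simp only [List.count_cons, if_pos, if_neg]
  norm_num
  omega

end Aux

namespace Dallajascar

variable {S : Type*} [Fintype S] [Nonempty S]

lemma W_eq (D : Dallajascar S) (x : S) :
    D.W x = true :: (((D.H x).map D.W).flatten ++ [false]) := by
  rw [W, WellFounded.fix_eq]
  simp only [List.map_attach_eq_pmap]
  rw [List.pmap_eq_map]

end Dallajascar

/-- The Jassological word of any Dallajascar is a Simple Jassological word. -/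
theorem mjword_simpleJasso {S : Type*} [Fintype S] [Nonempty S] (D : Dallajascar S) :
    SimpleJasso D.MJword := by
  have key : ∀ x : S, SimpleJasso (D.W x) := by
    intro x
    induction x using WellFounded.induction D.wfP with
    | _ x ih =>
      rw [D.W_eq x]
      refine simpleJasso_of_bal (bal_flatten ?_)
      intro A hA
      simp only [List.mem_map] at hA
      obtain ⟨y, hy, rfl⟩ := hA
      exact bal_of_simpleJasso (ih y ((D.mem_H x y).1 hy))
  exact key D.r
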